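/- Let J be the symmetric 7×7 Jacobian of the flexible star-class network with M = 7, J_{ik} = Σ_{j=1}^{7} β_j φ_{ij} φ_{kj} − γ·δ_{ik}. Assume 0 < β0 < γ (so R0 = β0/γ < 1) and γ/β0 < ζ < 1 + 7(1−R0)/R0. If φ_6 ∈ (0, 1/6] and |φ_6 − 1/7| < φ̃7, then every eigenvalue of J is negative; if φ_6 ∈ (0, 1/6] and |φ_6 − 1/7| > φ̃7, then J has a positive eigenvalue. -/

import Mathlib

open Matrix

/-- Off-diagonal fluxes of the flexible star-class network with `M = 7`:
the entry joining two distinct nodes depends only on the larger (0-based)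
index, `φ_{ik} = φ_{max(i,k)}` (1-based: `φ_{ik} = φ_{k−1}` for `i < k`). -/
noncomputable def flexOff7 (φ1 φ2 φ3 φ4 φ5 φ6 : ℝ) :
    Matrix (Fin 7) (Fin 7) ℝ :=
  Matrix.of fun i k => ![0, φ1, φ2, φ3, φ4, φ5, φ6] (max i k)

/-- Flux matrix of the flexible star-class network with `M = 7`: off-diagonal
entries given by `flexOff7`, diagonal entries `φ_{ii} = 1 − Σ_{j ≠ i} φ_{ij}`.
In particular node `7` is joined to every other node with flux `φ6` and
`φ_{77} = 1 − 6φ6`. -/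
noncomputable def flexFlux7 (φ1 φ2 φ3 φ4 φ5 φ6 : ℝ) :
    Matrix (Fin 7) (Fin 7) ℝ :=
  Matrix.of fun i k =>
    if i = k then
      1 - ∑ j ∈ Finset.univ.filter (fun j => j ≠ i), flexOff7 φ1 φ2 φ3 φ4 φ5 φ6 i j
    else flexOff7 φ1 φ2 φ3 φ4 φ5 φ6 i k

/-- Infection rates: `β_j = β0` for `j ≤ 6` (1-based), `β₇ = ζ·β0`. -/
noncomputable def flexBeta7 (β0 ζ : ℝ) : Fin 7 → ℝ :=
  ![β0, β0, β0, β0, β0, β0, ζ * β0]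

/-- Jacobian of the infected subsystem at the disease-free equilibrium:
`J_{ik} = Σ_j β_j φ_{ij} φ_{kj} − γ·δ_{ik}`. -/
noncomputable def flexJac7 (β0 ζ γ φ1 φ2 φ3 φ4 φ5 φ6 : ℝ) :
    Matrix (Fin 7) (Fin 7) ℝ :=
  Matrix.of fun i k =>
    (∑ j, flexBeta7 β0 ζ j * flexFlux7 φ1 φ2 φ3 φ4 φ5 φ6 i j *
        flexFlux7 φ1 φ2 φ3 φ4 φ5 φ6 k j)
      - γ * (if i = k then 1 else 0)

/-! ### Auxiliary lemmas -/

@[simp] theorem flex_cons_val_five {α : Type*} {m : ℕ} (x : α) (u : Fin (m+5) → α) :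
    vecCons x u 5 = vecHead (vecTail (vecTail (vecTail (vecTail u)))) := rfl

@[simp] theorem flex_cons_val_six {α : Type*} {m : ℕ} (x : α) (u : Fin (m+6) → α) :
    vecCons x u 6 = vecHead (vecTail (vecTail (vecTail (vecTail (vecTail u))))) := rfl

theorem flexFlux7_eq (φ1 φ2 φ3 φ4 φ5 φ6 : ℝ) :
    flexFlux7 φ1 φ2 φ3 φ4 φ5 φ6 =
    !![1-(φ1+φ2+φ3+φ4+φ5+φ6), φ1, φ2, φ3, φ4, φ5, φ6;
       φ1, 1-(φ1+φ2+φ3+φ4+φ5+φ6), φ2, φ3, φ4, φ5, φ6;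
       φ2, φ2, 1-(2*φ2+φ3+φ4+φ5+φ6), φ3, φ4, φ5, φ6;
       φ3, φ3, φ3, 1-(3*φ3+φ4+φ5+φ6), φ4, φ5, φ6;
       φ4, φ4, φ4, φ4, 1-(4*φ4+φ5+φ6), φ5, φ6;
       φ5, φ5, φ5, φ5, φ5, 1-(5*φ5+φ6), φ6;
       φ6, φ6, φ6, φ6, φ6, φ6, 1-6*φ6] := by
  ext i k
  fin_cases i <;> fin_cases k <;>
    simp [flexFlux7, flexOff7, Finset.sum_filter, Fin.sum_univ_seven, max_def] <;> ring

/-- quadratic form of the Jacobian on the invariant plane `span(1, e₇)`. -/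
theorem flex_qf_plane (β0 ζ γ φ1 φ2 φ3 φ4 φ5 φ6 a b : ℝ) :
    ![a,a,a,a,a,a,a+b] ⬝ᵥ (flexJac7 β0 ζ γ φ1 φ2 φ3 φ4 φ5 φ6) *ᵥ ![a,a,a,a,a,a,a+b]
      = a^2 * ((6+ζ)*β0 - 7*γ) + 2*a*b*(β0*(6*φ6 + ζ*(1-6*φ6)) - γ)
        + b^2 * (β0*(6*φ6^2 + ζ*(1-6*φ6)^2) - γ) := by
  simp [flexJac7, flexFlux7_eq, flexBeta7, dotProduct, Matrix.mulVec, Fin.sum_univ_seven]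
  ring

/-- orthogonal splitting of the quadratic form of the Jacobian. -/
theorem flex_qf_split (β0 ζ γ φ1 φ2 φ3 φ4 φ5 φ6 : ℝ) (x : Fin 7 → ℝ) :
    x ⬝ᵥ (flexJac7 β0 ζ γ φ1 φ2 φ3 φ4 φ5 φ6) *ᵥ x
      = (((x 0+x 1+x 2+x 3+x 4+x 5)/6)^2 * ((6+ζ)*β0 - 7*γ)
        + 2*((x 0+x 1+x 2+x 3+x 4+x 5)/6)*(x 6 - (x 0+x 1+x 2+x 3+x 4+x 5)/6)
            *(β0*(6*φ6 + ζ*(1-6*φ6)) - γ)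
        + (x 6 - (x 0+x 1+x 2+x 3+x 4+x 5)/6)^2 * (β0*(6*φ6^2 + ζ*(1-6*φ6)^2) - γ))
        + (![x 0 - (x 0+x 1+x 2+x 3+x 4+x 5)/6, x 1 - (x 0+x 1+x 2+x 3+x 4+x 5)/6,
             x 2 - (x 0+x 1+x 2+x 3+x 4+x 5)/6, x 3 - (x 0+x 1+x 2+x 3+x 4+x 5)/6,
             x 4 - (x 0+x 1+x 2+x 3+x 4+x 5)/6, x 5 - (x 0+x 1+x 2+x 3+x 4+x 5)/6, 0]
           ⬝ᵥ (flexJac7 β0 ζ γ φ1 φ2 φ3 φ4 φ5 φ6) *ᵥ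
           ![x 0 - (x 0+x 1+x 2+x 3+x 4+x 5)/6, x 1 - (x 0+x 1+x 2+x 3+x 4+x 5)/6,
             x 2 - (x 0+x 1+x 2+x 3+x 4+x 5)/6, x 3 - (x 0+x 1+x 2+x 3+x 4+x 5)/6,
             x 4 - (x 0+x 1+x 2+x 3+x 4+x 5)/6, x 5 - (x 0+x 1+x 2+x 3+x 4+x 5)/6, 0]) := by
  simp [flexJac7, flexFlux7_eq, flexBeta7, dotProduct, Matrix.mulVec, Fin.sum_univ_seven]
  ring

/-- the quadratic form in terms of the columns of the flux matrix. -/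
theorem flex_qf_sum (β0 ζ γ φ1 φ2 φ3 φ4 φ5 φ6 : ℝ) (x : Fin 7 → ℝ) :
    x ⬝ᵥ (flexJac7 β0 ζ γ φ1 φ2 φ3 φ4 φ5 φ6) *ᵥ x
      = (∑ j, flexBeta7 β0 ζ j * (∑ i, flexFlux7 φ1 φ2 φ3 φ4 φ5 φ6 i j * x i)^2)
        - γ * ∑ i, (x i)^2 := by
  simp [flexJac7, flexBeta7, dotProduct, Matrix.mulVec, Fin.sum_univ_seven]
  ring

/-- Cauchy–Schwarz/Jensen step for a stochastic row/column. -/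
theorem flex_cs_row (f w : Fin 7 → ℝ) (hnn : ∀ k, 0 ≤ f k) (hs : ∑ k, f k = 1) :
    (∑ k, f k * w k)^2 ≤ ∑ k, f k * (w k)^2 := by
  have h := Finset.sum_sq_le_sum_mul_sum_of_sq_eq_mul Finset.univ
    (r := fun k => f k * w k) (f := f) (g := fun k => f k * (w k)^2)
    (fun i _ => hnn i) (fun i _ => mul_nonneg (hnn i) (sq_nonneg _)) (fun i _ => by ring)
  simpa [hs] using h

theorem flex_colsum (φ1 φ2 φ3 φ4 φ5 φ6 : ℝ) (j : Fin 7) :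
    ∑ i, flexFlux7 φ1 φ2 φ3 φ4 φ5 φ6 i j = 1 := by
  rw [flexFlux7_eq]
  fin_cases j <;> simp [Fin.sum_univ_seven] <;> ring

theorem flex_rowsum (φ1 φ2 φ3 φ4 φ5 φ6 : ℝ) (i : Fin 7) :
    ∑ j, flexFlux7 φ1 φ2 φ3 φ4 φ5 φ6 i j = 1 := by
  rw [flexFlux7_eq]
  fin_cases i <;> simp [Fin.sum_univ_seven] <;> ring

theorem flex_symm (β0 ζ γ φ1 φ2 φ3 φ4 φ5 φ6 : ℝ) :
    (flexJac7 β0 ζ γ φ1 φ2 φ3 φ4 φ5 φ6).IsHermitian := by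
  ext i k
  simp only [flexJac7, Matrix.conjTranspose_apply, Matrix.of_apply, star_trivial]
  have h1 : (if k = i then (1:ℝ) else 0) = (if i = k then 1 else 0) := by
    by_cases h : i = k <;> simp [h, eq_comm]
  rw [h1]
  have h2 : ∀ j, flexBeta7 β0 ζ j * flexFlux7 φ1 φ2 φ3 φ4 φ5 φ6 k j *
      flexFlux7 φ1 φ2 φ3 φ4 φ5 φ6 i j
      = flexBeta7 β0 ζ j * flexFlux7 φ1 φ2 φ3 φ4 φ5 φ6 i j *
        flexFlux7 φ1 φ2 φ3 φ4 φ5 φ6 k j := fun j => by ring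
  rw [Finset.sum_congr rfl fun j _ => h2 j]


/-- entrywise nonnegativity of the flux matrix -/
theorem flex_nonneg (φ1 φ2 φ3 φ4 φ5 φ6 : ℝ)
    (hφ1 : 0 < φ1) (hφ2 : 0 < φ2) (hφ3 : 0 < φ3) (hφ4 : 0 < φ4)
    (hφ5 : 0 < φ5) (hφ6lo : 0 < φ6)
    (hdiag : ∀ i : Fin 7, 0 ≤ flexFlux7 φ1 φ2 φ3 φ4 φ5 φ6 i i) :
    ∀ i k, 0 ≤ flexFlux7 φ1 φ2 φ3 φ4 φ5 φ6 i k := by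
  intro i k
  rcases eq_or_ne i k with rfl | h
  · exact hdiag i
  · fin_cases i <;> fin_cases k <;>
      first
        | exact absurd rfl h
        | (rw [flexFlux7_eq]; simp; linarith)

set_option maxHeartbeats 1000000 in
/-- the quadratic form is bounded on the complement of the invariant plane -/
theorem flex_wbound (β0 ζ γ φ1 φ2 φ3 φ4 φ5 φ6 : ℝ) (w : Fin 7 → ℝ)
    (hβ0 : 0 < β0) (hζ1 : 1 < ζ)
    (hnn : ∀ i k, 0 ≤ flexFlux7 φ1 φ2 φ3 φ4 φ5 φ6 i k)
    (hy6 : (∑ i, flexFlux7 φ1 φ2 φ3 φ4 φ5 φ6 i 6 * w i) = 0) :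
    w ⬝ᵥ (flexJac7 β0 ζ γ φ1 φ2 φ3 φ4 φ5 φ6) *ᵥ w ≤ (β0 - γ) * ∑ i, (w i)^2 := by
  have hycs : ∀ j, (∑ i, flexFlux7 φ1 φ2 φ3 φ4 φ5 φ6 i j * w i)^2
      ≤ ∑ i, flexFlux7 φ1 φ2 φ3 φ4 φ5 φ6 i j * (w i)^2 := fun j =>
    flex_cs_row (fun i => flexFlux7 φ1 φ2 φ3 φ4 φ5 φ6 i j) w
      (fun i => hnn i j) (flex_colsum φ1 φ2 φ3 φ4 φ5 φ6 j)
  have hdouble : ∑ j : Fin 7, ∑ i : Fin 7, flexFlux7 φ1 φ2 φ3 φ4 φ5 φ6 i j * (w i)^2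
      = ∑ i, (w i)^2 := by
    rw [Finset.sum_comm]
    refine Finset.sum_congr rfl fun i _ => ?_
    rw [← Finset.sum_mul, flex_rowsum φ1 φ2 φ3 φ4 φ5 φ6 i, one_mul]
  have hysum : ∑ j, (∑ i, flexFlux7 φ1 φ2 φ3 φ4 φ5 φ6 i j * w i)^2 ≤ ∑ i, (w i)^2 := by
    calc ∑ j, (∑ i, flexFlux7 φ1 φ2 φ3 φ4 φ5 φ6 i j * w i)^2
        ≤ ∑ j : Fin 7, ∑ i : Fin 7, flexFlux7 φ1 φ2 φ3 φ4 φ5 φ6 i j * (w i)^2 :=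
          Finset.sum_le_sum fun j _ => hycs j
      _ = _ := hdouble
  have hbeta : (∑ j, flexBeta7 β0 ζ j * (∑ i, flexFlux7 φ1 φ2 φ3 φ4 φ5 φ6 i j * w i)^2)
      = β0 * ∑ j, (∑ i, flexFlux7 φ1 φ2 φ3 φ4 φ5 φ6 i j * w i)^2
        + (ζ-1)*β0*(∑ i, flexFlux7 φ1 φ2 φ3 φ4 φ5 φ6 i 6 * w i)^2 := by
    simp [flexBeta7, Fin.sum_univ_seven]
    ring
  rw [flex_qf_sum, hbeta, hy6]
  have hb' : β0 * (∑ j, (∑ i, flexFlux7 φ1 φ2 φ3 φ4 φ5 φ6 i j * w i)^2)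
      ≤ β0 * ∑ i, (w i)^2 := mul_le_mul_of_nonneg_left hysum hβ0.le
  nlinarith [hb']

set_option maxHeartbeats 1000000 in
/-- stability part: all eigenvalues negative. -/
theorem flex_part1 (β0 γ ζ φ1 φ2 φ3 φ4 φ5 φ6 : ℝ)
    (hβ0 : 0 < β0) (hβγ : β0 < γ) (hζ1 : 1 < ζ)
    (hnn : ∀ i k, 0 ≤ flexFlux7 φ1 φ2 φ3 φ4 φ5 φ6 i k)
    (hPv : (6+ζ)*β0 - 7*γ < 0)
    (hΔ : 0 < ((6+ζ)*β0 - 7*γ) * (β0*(6*φ6^2 + ζ*(1-6*φ6)^2) - γ)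
        - (β0*(6*φ6 + ζ*(1-6*φ6)) - γ)^2) :
    ∀ μ ∈ spectrum ℝ (flexJac7 β0 ζ γ φ1 φ2 φ3 φ4 φ5 φ6), μ < 0 := by
  intro μ hμ
  have hquad : ∀ a b : ℝ, a^2 * ((6+ζ)*β0 - 7*γ) + 2*a*b*(β0*(6*φ6 + ζ*(1-6*φ6)) - γ)
      + b^2 * (β0*(6*φ6^2 + ζ*(1-6*φ6)^2) - γ) ≤ 0 := by
    intro a b
    nlinarith [sq_nonneg (((6+ζ)*β0 - 7*γ)*a + (β0*(6*φ6 + ζ*(1-6*φ6)) - γ)*b),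
      mul_nonneg hΔ.le (sq_nonneg b), hPv]
  have hquad' : ∀ a b : ℝ, a ≠ 0 ∨ b ≠ 0 →
      a^2 * ((6+ζ)*β0 - 7*γ) + 2*a*b*(β0*(6*φ6 + ζ*(1-6*φ6)) - γ)
      + b^2 * (β0*(6*φ6^2 + ζ*(1-6*φ6)^2) - γ) < 0 := by
    intro a b hab
    rcases eq_or_ne b 0 with rfl | hb
    · have ha : a ≠ 0 := hab.resolve_right (by simp)
      have : 0 < a^2 := by positivity
      nlinarith
    · have : 0 < b^2 := by positivity
      nlinarith [sq_nonneg (((6+ζ)*β0 - 7*γ)*a + (β0*(6*φ6 + ζ*(1-6*φ6)) - γ)*b),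
        mul_pos hΔ this, hPv]
  -- extract an eigenvector
  obtain ⟨x, hx0, hx⟩ : ∃ x : Fin 7 → ℝ, x ≠ 0 ∧
      (flexJac7 β0 ζ γ φ1 φ2 φ3 φ4 φ5 φ6) *ᵥ x = μ • x := by
    have h1 : ¬IsUnit (algebraMap ℝ (Matrix (Fin 7) (Fin 7) ℝ) μ
        - flexJac7 β0 ζ γ φ1 φ2 φ3 φ4 φ5 φ6) := (spectrum.mem_iff).mp hμ
    have h2 : (algebraMap ℝ (Matrix (Fin 7) (Fin 7) ℝ) μ
        - flexJac7 β0 ζ γ φ1 φ2 φ3 φ4 φ5 φ6).det = 0 := by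
      by_contra hd
      exact h1 ((Matrix.isUnit_iff_isUnit_det _).mpr (isUnit_iff_ne_zero.mpr hd))
    obtain ⟨v, hv0, hv⟩ := (Matrix.exists_mulVec_eq_zero_iff).mpr h2
    refine ⟨v, hv0, ?_⟩
    rw [Matrix.sub_mulVec, Algebra.algebraMap_eq_smul_one, Matrix.smul_mulVec,
      Matrix.one_mulVec] at hv
    exact (sub_eq_zero.mp hv).symm
  have hT : 0 < x ⬝ᵥ x :=
    lt_of_le_of_ne (Finset.sum_nonneg fun i _ => mul_self_nonneg (x i))
      (fun h => hx0 (dotProduct_self_eq_zero.mp h.symm))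
  have hxq : x ⬝ᵥ (flexJac7 β0 ζ γ φ1 φ2 φ3 φ4 φ5 φ6) *ᵥ x = μ * (x ⬝ᵥ x) := by
    rw [hx, dotProduct_smul, smul_eq_mul]
  set A := (x 0+x 1+x 2+x 3+x 4+x 5)/6 with hA
  set B := x 6 - A with hB
  set w : Fin 7 → ℝ := ![x 0 - A, x 1 - A, x 2 - A, x 3 - A, x 4 - A, x 5 - A, 0]
    with hw
  have hsplit := flex_qf_split β0 ζ γ φ1 φ2 φ3 φ4 φ5 φ6 x
  rw [← hA, ← hB, ← hw] at hsplit
  have hy6 : (∑ i, flexFlux7 φ1 φ2 φ3 φ4 φ5 φ6 i 6 * w i) = 0 := by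
    rw [flexFlux7_eq]
    simp [hw, Fin.sum_univ_seven, hA]
    ring
  have hwJw := flex_wbound β0 ζ γ φ1 φ2 φ3 φ4 φ5 φ6 w hβ0 hζ1 hnn hy6
  have hWnn : 0 ≤ ∑ i, (w i)^2 := Finset.sum_nonneg fun i _ => sq_nonneg _
  have hneg : x ⬝ᵥ (flexJac7 β0 ζ γ φ1 φ2 φ3 φ4 φ5 φ6) *ᵥ x < 0 := by
    rcases eq_or_lt_of_le hWnn with hW0 | hWpos
    · have hwz : ∀ i, w i = 0 := by
        intro i
        have h0 := (Finset.sum_eq_zero_iff_of_nonneg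
          (fun i (_ : i ∈ Finset.univ) => sq_nonneg (w i))).mp hW0.symm i (Finset.mem_univ i)
        exact pow_eq_zero_iff (by norm_num : (2:ℕ) ≠ 0) |>.mp h0
      have hAB : A ≠ 0 ∨ B ≠ 0 := by
        by_contra hc
        push_neg at hc
        have h0 := hwz 0; have h1 := hwz 1; have h2 := hwz 2; have h3 := hwz 3
        have h4 := hwz 4; have h5 := hwz 5
        simp [hw] at h0 h1 h2 h3 h4 h5
        have xi0 : x 0 = 0 := by linarith [hc.1]
        have xi1 : x 1 = 0 := by linarith [hc.1]
        have xi2 : x 2 = 0 := by linarith [hc.1]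
        have xi3 : x 3 = 0 := by linarith [hc.1]
        have xi4 : x 4 = 0 := by linarith [hc.1]
        have xi5 : x 5 = 0 := by linarith [hc.1]
        have xi6 : x 6 = 0 := by
          have hB' := hB
          rw [hc.1, hc.2] at hB'
          linarith [hB']
        simp [dotProduct, Fin.sum_univ_seven, xi0, xi1, xi2, xi3, xi4, xi5, xi6] at hT
      have := hquad' A B hAB
      calc x ⬝ᵥ (flexJac7 β0 ζ γ φ1 φ2 φ3 φ4 φ5 φ6) *ᵥ x
          = _ := hsplit
        _ < 0 + 0 := by
            apply add_lt_add_of_lt_of_le this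
            calc w ⬝ᵥ (flexJac7 β0 ζ γ φ1 φ2 φ3 φ4 φ5 φ6) *ᵥ w
                ≤ (β0 - γ) * ∑ i, (w i)^2 := hwJw
              _ = 0 := by rw [← hW0]; ring
        _ = 0 := by ring
    · have hq := hquad A B
      calc x ⬝ᵥ (flexJac7 β0 ζ γ φ1 φ2 φ3 φ4 φ5 φ6) *ᵥ x
          = _ := hsplit
        _ ≤ 0 + (β0 - γ) * ∑ i, (w i)^2 := add_le_add hq hwJw
        _ < 0 := by nlinarith [hWpos]
  rw [hxq] at hneg
  nlinarith [hneg, hT]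

set_option maxHeartbeats 1000000 in
/-- instability part: a positive eigenvalue exists. -/
theorem flex_part2 (β0 γ ζ φ1 φ2 φ3 φ4 φ5 φ6 : ℝ)
    (hPv : (6+ζ)*β0 - 7*γ < 0)
    (hΔ : ((6+ζ)*β0 - 7*γ) * (β0*(6*φ6^2 + ζ*(1-6*φ6)^2) - γ)
        - (β0*(6*φ6 + ζ*(1-6*φ6)) - γ)^2 < 0) :
    ∃ μ ∈ spectrum ℝ (flexJac7 β0 ζ γ φ1 φ2 φ3 φ4 φ5 φ6), 0 < μ := by
  set Qv := β0*(6*φ6 + ζ*(1-6*φ6)) - γ with hQv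
  set Pv := (6+ζ)*β0 - 7*γ with hPvdef
  have huJu := flex_qf_plane β0 ζ γ φ1 φ2 φ3 φ4 φ5 φ6 Qv (-Pv)
  have hval : Qv^2 * ((6+ζ)*β0 - 7*γ) + 2*Qv*(-Pv)*(β0*(6*φ6 + ζ*(1-6*φ6)) - γ)
      + (-Pv)^2 * (β0*(6*φ6^2 + ζ*(1-6*φ6)^2) - γ)
      = Pv * (Pv * (β0*(6*φ6^2 + ζ*(1-6*φ6)^2) - γ) - Qv^2) := by
    rw [hQv, hPvdef]; ring
  have hupos : 0 < ![Qv,Qv,Qv,Qv,Qv,Qv,Qv+(-Pv)] ⬝ᵥ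
      (flexJac7 β0 ζ γ φ1 φ2 φ3 φ4 φ5 φ6) *ᵥ ![Qv,Qv,Qv,Qv,Qv,Qv,Qv+(-Pv)] := by
    rw [huJu, hval]
    exact mul_pos_of_neg_of_neg hPv hΔ
  by_contra hcon
  push_neg at hcon
  have hH : (flexJac7 β0 ζ γ φ1 φ2 φ3 φ4 φ5 φ6).IsHermitian :=
    flex_symm β0 ζ γ φ1 φ2 φ3 φ4 φ5 φ6
  have hHneg : (-(flexJac7 β0 ζ γ φ1 φ2 φ3 φ4 φ5 φ6)).IsHermitian := hH.neg
  have hPSD : (-(flexJac7 β0 ζ γ φ1 φ2 φ3 φ4 φ5 φ6)).PosSemidef := by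
    refine hHneg.posSemidef_iff_eigenvalues_nonneg.mpr fun i => show (0:ℝ) ≤ hHneg.eigenvalues i from ?_
    have hmem := hHneg.eigenvalues_mem_spectrum_real i
    rw [← spectrum.neg_eq] at hmem
    have hmem' : -hHneg.eigenvalues i ∈ spectrum ℝ (flexJac7 β0 ζ γ φ1 φ2 φ3 φ4 φ5 φ6) :=
      Set.mem_neg.mp hmem
    have := hcon _ hmem'
    linarith
  have hge := hPSD.dotProduct_mulVec_nonneg ![Qv,Qv,Qv,Qv,Qv,Qv,Qv+(-Pv)]
  rw [Matrix.neg_mulVec] at hge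
  simp only [star_trivial, dotProduct_neg] at hge
  exact absurd hupos (by linarith)

set_option maxHeartbeats 1000000 in
theorem flexStarClass7_DFE (β0 γ ζ φ1 φ2 φ3 φ4 φ5 φ6 : ℝ)
    (hβ0 : 0 < β0) (hβγ : β0 < γ)
    (hζlo : γ / β0 < ζ)
    (hζhi : ζ < 1 + 7 * (1 - β0 / γ) / (β0 / γ))
    (hφ1 : 0 < φ1) (hφ2 : 0 < φ2) (hφ3 : 0 < φ3) (hφ4 : 0 < φ4)
    (hφ5 : 0 < φ5) (hφ6lo : 0 < φ6) (hφ6hi : φ6 ≤ 1 / 6)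
    (hdiag : ∀ i : Fin 7, 0 ≤ flexFlux7 φ1 φ2 φ3 φ4 φ5 φ6 i i) :
    (|φ6 - 1 / 7| <
        (1 / 7) * Real.sqrt ((7 * (1 - β0 / γ) - (β0 / γ) * (ζ - 1)) /
          ((β0 / γ) * (7 * ζ * (1 - β0 / γ) - (ζ - 1)))) →
      ∀ μ ∈ spectrum ℝ (flexJac7 β0 ζ γ φ1 φ2 φ3 φ4 φ5 φ6), μ < 0) ∧
    ((1 / 7) * Real.sqrt ((7 * (1 - β0 / γ) - (β0 / γ) * (ζ - 1)) /
          ((β0 / γ) * (7 * ζ * (1 - β0 / γ) - (ζ - 1)))) < |φ6 - 1 / 7| →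
      ∃ μ ∈ spectrum ℝ (flexJac7 β0 ζ γ φ1 φ2 φ3 φ4 φ5 φ6), 0 < μ) := by
  have hγ : 0 < γ := hβ0.trans hβγ
  have hζ1 : 1 < ζ := lt_trans ((one_lt_div hβ0).mpr hβγ) hζlo
  have hA2 : γ < ζ * β0 := (div_lt_iff₀ hβ0).mp hζlo
  -- translate the upper bound on ζ
  have hA1 : β0 * (ζ - 1) < 7 * (γ - β0) := by
    have h0 : 7 * (1 - β0 / γ) / (β0 / γ) = 7 * (γ - β0) / β0 := by
      rw [div_eq_div_iff (by positivity) hβ0.ne']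
      field_simp
    rw [h0] at hζhi
    have h1 : ζ - 1 < 7 * (γ-β0) / β0 := by linarith
    have h2 : (ζ-1) * β0 < 7 * (γ-β0) / β0 * β0 :=
      mul_lt_mul_of_pos_right h1 hβ0
    have h3 : 7*(γ-β0)/β0*β0 = 7*(γ-β0) := by field_simp
    rw [h3] at h2; linarith
  have hD1 : 0 < 7*ζ*(γ-β0) - γ*(ζ-1) := by
    rcases le_or_gt (7*β0) (6*γ) with h|h
    · nlinarith [mul_nonneg (sub_pos.mpr hA2).le (show (0:ℝ) ≤ 6*γ - 7*β0 by linarith),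
        mul_pos hγ (sub_pos.mpr hβγ), hβ0]
    · nlinarith [mul_pos (sub_pos.mpr hA1) (show (0:ℝ) < 7*β0 - 6*γ by linarith),
        sq_nonneg (γ - β0), hβ0]
  have hPv : (6+ζ)*β0 - 7*γ < 0 := by nlinarith [hA1]
  -- the value inside the square root, cleared of denominators
  have hprod : ((7 * (1 - β0 / γ) - (β0 / γ) * (ζ - 1)) /
        ((β0 / γ) * (7 * ζ * (1 - β0 / γ) - (ζ - 1))))
      * (β0 * (7*ζ*(γ-β0) - γ*(ζ-1))) = (7*(γ-β0) - β0*(ζ-1)) * γ := by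
    have hd2 : 7 * ζ * (1 - β0 / γ) - (ζ - 1) ≠ 0 := by
      have h : 7 * ζ * (1 - β0 / γ) - (ζ - 1) = (7*ζ*(γ-β0) - γ*(ζ-1))/γ := by
        field_simp
      rw [h]
      exact div_ne_zero hD1.ne' hγ.ne'
    rw [div_mul_eq_mul_div, div_eq_iff (mul_ne_zero (by positivity) hd2)]
    field_simp
  have habs : |φ6 - 1/7| = |7*φ6 - 1|/7 := by
    rw [show φ6 - 1/7 = (7*φ6-1)/7 by ring, abs_div]
    norm_num
  have hbd1 : 0 < β0 * (7*ζ*(γ-β0) - γ*(ζ-1)) := mul_pos hβ0 hD1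
  constructor
  · intro hlt
    rw [habs] at hlt
    have hlt' : |7*φ6 - 1| < Real.sqrt ((7 * (1 - β0 / γ) - (β0 / γ) * (ζ - 1)) /
        ((β0 / γ) * (7 * ζ * (1 - β0 / γ) - (ζ - 1)))) := by linarith
    have hS2 : (7*φ6 - 1)^2 < (7 * (1 - β0 / γ) - (β0 / γ) * (ζ - 1)) /
        ((β0 / γ) * (7 * ζ * (1 - β0 / γ) - (ζ - 1))) := by
      have := (Real.lt_sqrt (abs_nonneg _)).mp hlt'
      rwa [sq_abs] at this
    have hpoly : (7*φ6-1)^2 * (β0 * (7*ζ*(γ-β0) - γ*(ζ-1)))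
        < (7*(γ-β0) - β0*(ζ-1)) * γ := by
      calc (7*φ6-1)^2 * (β0 * (7*ζ*(γ-β0) - γ*(ζ-1)))
          < _ * (β0 * (7*ζ*(γ-β0) - γ*(ζ-1))) := mul_lt_mul_of_pos_right hS2 hbd1
        _ = _ := hprod
    have hΔ : 0 < ((6+ζ)*β0 - 7*γ) * (β0*(6*φ6^2 + ζ*(1-6*φ6)^2) - γ)
        - (β0*(6*φ6 + ζ*(1-6*φ6)) - γ)^2 := by nlinarith [hpoly]
    exact flex_part1 β0 γ ζ φ1 φ2 φ3 φ4 φ5 φ6 hβ0 hβγ hζ1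
      (flex_nonneg φ1 φ2 φ3 φ4 φ5 φ6 hφ1 hφ2 hφ3 hφ4 hφ5 hφ6lo hdiag) hPv hΔ
  · intro hgt
    rw [habs] at hgt
    have hgt' : Real.sqrt ((7 * (1 - β0 / γ) - (β0 / γ) * (ζ - 1)) /
        ((β0 / γ) * (7 * ζ * (1 - β0 / γ) - (ζ - 1)))) < |7*φ6 - 1| := by linarith
    have habs0 : 0 < |7*φ6 - 1| := lt_of_le_of_lt (Real.sqrt_nonneg _) hgt'
    have hS2 : (7 * (1 - β0 / γ) - (β0 / γ) * (ζ - 1)) /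
        ((β0 / γ) * (7 * ζ * (1 - β0 / γ) - (ζ - 1))) < (7*φ6 - 1)^2 := by
      have := (Real.sqrt_lt' habs0).mp hgt'
      rwa [sq_abs] at this
    have hpoly : (7*(γ-β0) - β0*(ζ-1)) * γ
        < (7*φ6-1)^2 * (β0 * (7*ζ*(γ-β0) - γ*(ζ-1))) := by
      calc (7*(γ-β0) - β0*(ζ-1)) * γ
          = _ := hprod.symm
        _ < (7*φ6-1)^2 * (β0 * (7*ζ*(γ-β0) - γ*(ζ-1))) :=
            mul_lt_mul_of_pos_right hS2 hbd1
    have hΔ : ((6+ζ)*β0 - 7*γ) * (β0*(6*φ6^2 + ζ*(1-6*φ6)^2) - γ)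
        - (β0*(6*φ6 + ζ*(1-6*φ6)) - γ)^2 < 0 := by nlinarith [hpoly]
    exact flex_part2 β0 γ ζ φ1 φ2 φ3 φ4 φ5 φ6 hPv hΔ
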